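/- Let X, Y be Banach spaces with X finite-dimensional, and q : Y → X a bounded surjective linear map. Let C > 0 be such that every x ∈ X lifts to y ∈ Y with ‖y‖ ≤ C‖x‖, and fix A > C. Let (Y_α)_{α∈I} be an increasing net of subspaces of Y with q(Y_α) = X for all α and with ∪_α (Y_α ∩ ker q) dense in ker q. Fix a finite set F ⊆ ∪_α Y_α. Then for every ε > 0 there exist δ > 0 and α₀ ∈ I such that: whenever α ≥ α₀, W is a Banach space, and T : Y_α → W is a linear contraction with ‖T restricted to ker(q) ∩ Y_α‖ ≤ δ, there exists S : X → W with ‖S‖ ≤ A and ‖T(x) - S(q(x))‖ ≤ ε for all x ∈ F. -/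

import Mathlib

set_option maxHeartbeats 1000000


/-- Let `X, Y` be Banach spaces with `X` finite-dimensional, and
`q : Y → X` a bounded surjective linear map. Let `C > 0` be such that every `x ∈ X` lifts
to `y ∈ Y` with `‖y‖ ≤ C ‖x‖`, and fix `A > C`. Let `(Y_α)_{α ∈ I}` be an increasing net
of subspaces of `Y` with `q(Y_α) = X` for all `α` and with `⋃_α (Y_α ∩ ker q)` dense in
`ker q`. Fix a finite set `F ⊆ ⋃_α Y_α`. Then for every `ε > 0` there exist `δ > 0` and
`α₀ ∈ I` such that: whenever `α ≥ α₀`, `W` is a Banach space, and `T : Y_α → W` is a linear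
contraction whose restriction to `ker q ∩ Y_α` has norm at most `δ`, there exists
`S : X → W` with `‖S‖ ≤ A` and `‖T x - S (q x)‖ ≤ ε` for all `x ∈ F`. -/
theorem approximate_factorization_through_quotient
    {X Y : Type*} [NormedAddCommGroup X] [NormedSpace ℂ X] [FiniteDimensional ℂ X]
    [NormedAddCommGroup Y] [NormedSpace ℂ Y] [CompleteSpace Y]
    (q : Y →L[ℂ] X) (hq : Function.Surjective q)
    {C : ℝ} (hC : 0 < C) (hlift : ∀ x : X, ∃ y : Y, q y = x ∧ ‖y‖ ≤ C * ‖x‖)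
    {A : ℝ} (hA : C < A)
    {I : Type*} [Preorder I] [Countable I] [Nonempty I] [IsDirected I (· ≤ ·)]
    (Yα : I → Submodule ℂ Y) (hmono : Monotone Yα)
    (honto : ∀ α, Submodule.map (q : Y →ₗ[ℂ] X) (Yα α) = ⊤)
    (hker : (LinearMap.ker (q : Y →ₗ[ℂ] X) : Set Y) ⊆
      closure (⋃ α : I, ((Yα α : Set Y) ∩ (LinearMap.ker (q : Y →ₗ[ℂ] X) : Set Y))))
    (F : Finset Y) (hF : (F : Set Y) ⊆ ⋃ α : I, (Yα α : Set Y)) :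
    ∀ ε > (0 : ℝ), ∃ δ > (0 : ℝ), ∃ α₀ : I, ∀ α ≥ α₀,
      ∀ (W : Type) [NormedAddCommGroup W] [NormedSpace ℂ W] [CompleteSpace W],
      ∀ T : (Yα α) →L[ℂ] W, ‖T‖ ≤ 1 →
      (∀ y : Yα α, (y : Y) ∈ LinearMap.ker (q : Y →ₗ[ℂ] X) → ‖T y‖ ≤ δ * ‖(y : Y)‖) →
      ∃ S : X →L[ℂ] W, ‖S‖ ≤ A ∧
        ∀ x ∈ F, ∀ hx : x ∈ Yα α, ‖T ⟨x, hx⟩ - S (q x)‖ ≤ ε := by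
  classical
  intro ε hε
  have hA0 : (0 : ℝ) < A := hC.trans hA
  obtain ⟨α₁⟩ : Nonempty I := inferInstance
  -- a linear lift L : X → Y with range in Yα α₁
  set q' : Y →ₗ[ℂ] X := (q : Y →ₗ[ℂ] X) with hq'
  let qr : (Yα α₁) →ₗ[ℂ] X := q' ∘ₗ (Yα α₁).subtype
  have hqr : LinearMap.range qr = ⊤ := by
    rw [LinearMap.range_comp, Submodule.range_subtype]
    exact honto α₁
  obtain ⟨g, hg⟩ := qr.exists_rightInverse_of_surjective hqr
  set L : X →ₗ[ℂ] Y := (Yα α₁).subtype ∘ₗ g with hL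
  have hqL : ∀ x : X, q (L x) = x := by
    intro x
    have := congrArg (fun f => f x) hg
    simpa [qr, hL, hq', LinearMap.comp_apply] using this
  have hLmem : ∀ x : X, L x ∈ Yα α₁ := fun x => (g x).2
  let Lc : X →L[ℂ] Y := LinearMap.toContinuousLinearMap L
  have hLc : ∀ x, Lc x = L x := fun _ => rfl
  -- constants
  set η : ℝ := (A - C) / 4 with hη
  have hAC : (0:ℝ) < A - C := by linarith
  have hη0 : 0 < η := by rw [hη]; positivity
  set M : ℝ := ‖Lc‖ + C + η + 1 with hM
  have hM0 : 0 < M := by positivity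
  set θ : ℝ := (A - C) / (4 * A) with hθ
  have hθ0 : 0 < θ := by rw [hθ]; positivity
  set K : ℝ := 1 + ∑ x ∈ F, ‖x - L (q x)‖ with hK
  have hK0 : 0 < K := by positivity
  have hθA : θ * A = (A - C) / 4 := by rw [hθ]; field_simp
  have hθ1 : θ < 1 := by
    rw [hθ, div_lt_one (by positivity)]; linarith
  set δ : ℝ := min ((A - C) / (4 * M)) (ε / K) with hδ
  have hδ0 : 0 < δ := lt_min (by rw [hM]; positivity) (by positivity)
  have hδK : δ ≤ ε / K := min_le_right _ _
  have hδM : δ * M ≤ (A - C) / 4 := by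
    have h1 : δ ≤ (A - C) / (4 * M) := min_le_left _ _
    calc δ * M ≤ (A - C) / (4 * M) * M := by nlinarith
      _ = (A - C) / 4 := by field_simp
  clear_value δ K θ M η Lc L
  -- a θ-net of the unit sphere
  haveI : ProperSpace X := FiniteDimensional.proper ℂ X
  have hcomp : TotallyBounded (Metric.sphere (0 : X) 1) :=
    (isCompact_sphere 0 1).totallyBounded
  obtain ⟨t, hts, htfin, htcov⟩ :=
    totallyBounded_iff_subset.mp hcomp _ (Metric.dist_mem_uniformity hθ0)
  -- for each point of the net, choose an approximating kernel element
  have key : ∀ z : X, ∃ (β : I) (k : Y), ‖z‖ = 1 →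
      k ∈ Yα β ∧ q k = 0 ∧ ‖L z - k‖ ≤ C + η ∧ ‖k‖ ≤ M := by
    intro z
    by_cases hz : ‖z‖ = 1
    · obtain ⟨y, hqy, hy⟩ := hlift z
      have hyC : ‖y‖ ≤ C := by simpa [hz] using hy
      have hmem : L z - y ∈ (LinearMap.ker q' : Set Y) := by
        simp only [SetLike.mem_coe, LinearMap.mem_ker, hq']
        simp [map_sub, hqL z, hqy]
      have hclos := hker hmem
      rw [Metric.mem_closure_iff] at hclos
      obtain ⟨k, hkmem, hkdist⟩ := hclos η hη0
      rw [Set.mem_iUnion] at hkmem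
      obtain ⟨β, hkβ, hkker⟩ := hkmem
      have hk0 : q k = 0 := by
        have := hkker
        simpa [hq', SetLike.mem_coe, LinearMap.mem_ker] using this
      have hdist : ‖L z - y - k‖ < η := by
        rw [dist_eq_norm] at hkdist
        simpa [sub_sub] using hkdist
      have hLz : ‖L z‖ ≤ ‖Lc‖ := by
        have := Lc.le_opNorm z
        simpa [hLc, hz] using this
      refine ⟨β, k, fun _ => ⟨hkβ, hk0, ?_, ?_⟩⟩
      · have : ‖L z - k‖ ≤ ‖L z - y - k‖ + ‖y‖ := by
          have : L z - k = (L z - y - k) + y := by abel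
          rw [this]; exact norm_add_le _ _
        linarith
      · have h1 : ‖k‖ ≤ ‖L z - y - k‖ + ‖L z‖ + ‖y‖ := by
          have heq : k = -(L z - y - k) + L z - y := by abel
          calc ‖k‖ = ‖-(L z - y - k) + L z - y‖ := by rw [← heq]
            _ ≤ ‖-(L z - y - k) + L z‖ + ‖y‖ := norm_sub_le _ _
            _ ≤ ‖-(L z - y - k)‖ + ‖L z‖ + ‖y‖ := by
                have := norm_add_le (-(L z - y - k)) (L z); linarith
            _ = ‖L z - y - k‖ + ‖L z‖ + ‖y‖ := by rw [norm_neg]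
        have : ‖k‖ ≤ η + ‖Lc‖ + C := by linarith
        linarith [this]
    · exact ⟨α₁, 0, fun h => absurd h hz⟩
  choose β k hk using key
  -- choose α₀
  obtain ⟨α₀, hα₀⟩ := Finset.exists_le (insert α₁ (htfin.toFinset.image β))
  have hα₁le : α₁ ≤ α₀ := hα₀ _ (Finset.mem_insert_self _ _)
  have hβle : ∀ z ∈ t, β z ≤ α₀ := fun z hz =>
    hα₀ _ (Finset.mem_insert_of_mem (Finset.mem_image_of_mem β (htfin.mem_toFinset.mpr hz)))
  refine ⟨δ, hδ0, α₀, ?_⟩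
  intro α hα W _ _ _ T hT hTker
  have hLmemα : ∀ x : X, L x ∈ Yα α := fun x => hmono (hα₁le.trans hα) (hLmem x)
  let Lr : X →ₗ[ℂ] (Yα α) := L.codRestrict (Yα α) hLmemα
  let Lrc : X →L[ℂ] (Yα α) := LinearMap.toContinuousLinearMap Lr
  have hLrc : ∀ x : X, ((Lrc x : Y)) = L x := fun _ => rfl
  set S : X →L[ℂ] W := T.comp Lrc with hS
  have hSapp : ∀ x : X, S x = T (Lrc x) := fun _ => rfl
  clear_value Lrc S
  -- bound on net points
  have hnet : ∀ z ∈ t, ‖S z‖ ≤ C + (A - C) / 2 := by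
    intro z hz
    have hz1 : ‖z‖ = 1 := by
      have := hts hz
      simpa [Metric.mem_sphere, dist_eq_norm] using this
    obtain ⟨hkβ, hk0, hkL, hkM⟩ := hk z hz1
    have hkα : k z ∈ Yα α := hmono ((hβle z hz).trans hα) hkβ
    set k' : (Yα α) := ⟨k z, hkα⟩ with hk'
    have h1 : ‖T (Lrc z - k')‖ ≤ C + η := by
      have hle := T.le_opNorm (Lrc z - k')
      have hcoe : ((Lrc z - k' : Yα α) : Y) = L z - k z := by
        simp [hLrc, hk']
      have hn : ‖Lrc z - k'‖ = ‖L z - k z‖ := by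
        rw [← hcoe]; rfl
      nlinarith [norm_nonneg (Lrc z - k'), norm_nonneg (T (Lrc z - k'))]
    have h2 : ‖T k'‖ ≤ δ * M := by
      have hle := hTker k' (by simpa [hq', LinearMap.mem_ker] using hk0)
      have hn : ‖(k' : Y)‖ = ‖k z‖ := by rw [hk']
      nlinarith [hδ0.le, hkM]
    have h3 : S z = T (Lrc z - k') + T k' := by
      rw [map_sub, hSapp]; abel
    calc ‖S z‖ ≤ ‖T (Lrc z - k')‖ + ‖T k'‖ := by rw [h3]; exact norm_add_le _ _
      _ ≤ (C + η) + δ * M := add_le_add h1 h2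
      _ ≤ C + η + (A - C) / 4 := by linarith [hδM]
      _ = C + (A - C) / 2 := by rw [hη]; ring
  -- global norm bound
  have hSb : ‖S‖ ≤ C + (A - C) / 2 + θ * ‖S‖ := by
    apply ContinuousLinearMap.opNorm_le_bound
    · have := norm_nonneg S; positivity
    intro x
    rcases eq_or_ne x 0 with rfl | hx0
    · simp
    · set u : X := (‖x‖⁻¹ : ℂ) • x with hu
      have hxn : (0:ℝ) < ‖x‖ := norm_pos_iff.mpr hx0
      have hu1 : ‖u‖ = 1 := by
        rw [hu, norm_smul]
        simp [Complex.norm_real, abs_of_pos (inv_pos.mpr hxn)]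
        field_simp
      have humem : u ∈ Metric.sphere (0 : X) 1 := by
        simpa [Metric.mem_sphere, dist_eq_norm] using hu1
      obtain ⟨z, hzt, hdz⟩ : ∃ z ∈ t, dist u z < θ := by
        have := htcov humem
        rw [Set.mem_iUnion₂] at this
        obtain ⟨z, hzt, hz⟩ := this
        exact ⟨z, hzt, hz⟩
      have hSu : ‖S u‖ ≤ C + (A - C) / 2 + θ * ‖S‖ := by
        have h1 : ‖S u - S z‖ ≤ ‖S‖ * θ := by
          calc ‖S u - S z‖ = ‖S (u - z)‖ := by rw [map_sub]
            _ ≤ ‖S‖ * ‖u - z‖ := S.le_opNorm _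
            _ ≤ ‖S‖ * θ := by
                have : ‖u - z‖ < θ := by rwa [dist_eq_norm] at hdz
                nlinarith [norm_nonneg S]
        have h2 : ‖S u‖ ≤ ‖S u - S z‖ + ‖S z‖ := by
          have := norm_add_le (S u - S z) (S z); simpa using this
        have h3 := hnet z hzt
        linarith
      have hx : x = (‖x‖ : ℂ) • u := by
        rw [hu, smul_smul]
        rw [← Complex.ofReal_inv, ← Complex.ofReal_mul]
        rw [mul_inv_cancel₀ hxn.ne']
        simp
      calc ‖S x‖ = ‖x‖ * ‖S u‖ := by
            conv_lhs => rw [hx]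
            rw [map_smul, norm_smul]
            simp
        _ ≤ (C + (A - C) / 2 + θ * ‖S‖) * ‖x‖ := by
            have := mul_le_mul_of_nonneg_left hSu (norm_nonneg x)
            linarith
  have hSA : ‖S‖ ≤ A := by
    have hs0 : (0:ℝ) ≤ ‖S‖ := norm_nonneg S
    have h1 : ‖S‖ * (1 - θ) ≤ A * (1 - θ) := by
      have e1 : ‖S‖ * (1 - θ) = ‖S‖ - θ * ‖S‖ := by ring
      have e2 : A * (1 - θ) = A - θ * A := by ring
      rw [e1, e2, hθA]
      linarith [hSb]
    exact le_of_mul_le_mul_right h1 (by linarith)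
  refine ⟨S, hSA, ?_⟩
  intro x hxF hx
  set d : (Yα α) := ⟨x, hx⟩ - Lrc (q x) with hd
  have hdcoe : (d : Y) = x - L (q x) := by
    rw [hd]; push_cast; rw [hLrc]
  have hdker : (d : Y) ∈ LinearMap.ker q' := by
    rw [LinearMap.mem_ker, hdcoe]
    simp [hq', map_sub, hqL]
  have heq : T ⟨x, hx⟩ - S (q x) = T d := by
    rw [hd, map_sub, hSapp]
  rw [heq]
  have h1 := hTker d hdker
  have h2 : ‖(d : Y)‖ ≤ K := by
    rw [hdcoe, hK]
    have := Finset.single_le_sum (f := fun y => ‖y - L (q y)‖)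
      (fun y _ => norm_nonneg _) hxF
    linarith
  calc ‖T d‖ ≤ δ * ‖(d : Y)‖ := h1
    _ ≤ (ε / K) * K := by nlinarith [norm_nonneg (d : Y), hδK, hδ0.le]
    _ = ε := by field_simp
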